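/- Let a, b be real numbers with -1 < a ≤ 0, |b| < 1 and |b| < 1 + a. Then there exists a constant C > 0, depending only on a and b, such that for all s, t ≥ 0: t^{1+a+b} + s^{1+a+b} - 2·R_{a,b}(t,s) ≤ C · |t-s|^{1+a+b}. -/

import Mathlib

open Real MeasureTheory

/-- The Euler Beta function. -/
noncomputable def Beta (x y : ℝ) : ℝ := Real.Gamma x * Real.Gamma y / Real.Gamma (x + y)

/-- The covariance function `R_{a,b}(t,s)` of the weighted fractional Brownian motion. -/
noncomputable def R (a b t s : ℝ) : ℝ :=
  (1 / (2 * Beta (a + 1) (b + 1))) *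
    ∫ u in (0:ℝ)..(min t s), u ^ a * ((t - u) ^ b + (s - u) ^ b)

lemma beta_pos' {a b : ℝ} (ha : -1 < a) (hb : -1 < b) : 0 < Beta (a+1) (b+1) := by
  have h1 : 0 < Real.Gamma (a+1) := Real.Gamma_pos_of_pos (by linarith)
  have h2 : 0 < Real.Gamma (b+1) := Real.Gamma_pos_of_pos (by linarith)
  have h3 : 0 < Real.Gamma (a+1+(b+1)) := Real.Gamma_pos_of_pos (by linarith)
  exact div_pos (mul_pos h1 h2) h3

/-- Integrability of the Beta-type integrand on `[0, c]`. -/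
lemma integ' {a b : ℝ} (ha : -1 < a) (hb : -1 < b) {c : ℝ} (hc : 0 ≤ c) :
    IntervalIntegrable (fun u => u ^ a * (c - u) ^ b) volume 0 c := by
  rcases eq_or_lt_of_le hc with rfl | hc
  · exact IntervalIntegrable.refl
  have h1 : IntervalIntegrable (fun u => u ^ a * (c - u) ^ b) volume 0 (c/2) := by
    apply IntervalIntegrable.mul_continuousOn
    · exact intervalIntegral.intervalIntegrable_rpow' ha
    · apply ContinuousOn.rpow_const (by fun_prop)
      intro x hx
      rw [Set.uIcc_of_le (by linarith)] at hx
      exact Or.inl (by simp only [Set.mem_Icc] at hx; intro h; linarith [hx.2])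
  have h2 : IntervalIntegrable (fun u => u ^ a * (c - u) ^ b) volume (c/2) c := by
    apply IntervalIntegrable.continuousOn_mul
    · have hi : IntervalIntegrable (fun u => u ^ b) volume 0 (c/2) :=
        intervalIntegral.intervalIntegrable_rpow' hb
      have h4 := (hi.comp_sub_left c).symm
      -- h4 : IntervalIntegrable (fun x => (c - x) ^ b) volume (c - c/2) (c - 0)
      apply h4.mono_set
      rw [Set.uIcc_of_le (by linarith : c/2 ≤ c),
        Set.uIcc_of_le (by linarith : c - c/2 ≤ c - 0)]
      exact Set.Icc_subset_Icc (by linarith) (by linarith)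
    · apply ContinuousOn.rpow_const (by fun_prop)
      intro x hx
      rw [Set.uIcc_of_le (by linarith)] at hx
      exact Or.inl (by simp only [Set.mem_Icc] at hx; intro h; linarith [hx.1])
  exact h1.trans h2

/-- The scaled real Beta integral. -/
lemma beta_eval' {a b : ℝ} (ha : -1 < a) (hb : -1 < b) (hp : 0 < 1 + a + b) {c : ℝ}
    (hc : 0 ≤ c) :
    ∫ u in (0:ℝ)..c, u ^ a * (c - u) ^ b = c ^ (1+a+b) * Beta (a+1) (b+1) := by
  rcases eq_or_lt_of_le hc with rfl | hc
  · rw [intervalIntegral.integral_same, Real.zero_rpow hp.ne']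
    ring
  have hsc := Complex.betaIntegral_scaled ((a:ℂ)+1) ((b:ℂ)+1) hc
  have hGne : ((Real.Gamma (a+1+(b+1)) : ℝ) : ℂ) ≠ 0 := by
    exact_mod_cast (Real.Gamma_pos_of_pos (by linarith : (0:ℝ) < a+1+(b+1))).ne'
  have hBeq : Complex.betaIntegral ((a:ℂ)+1) ((b:ℂ)+1) = (Beta (a+1) (b+1) : ℂ) := by
    have hre1 : 0 < Complex.re ((a:ℂ)+1) := by simp; linarith
    have hre2 : 0 < Complex.re ((b:ℂ)+1) := by simp; linarith
    have hmul := Complex.Gamma_mul_Gamma_eq_betaIntegral hre1 hre2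
    have h1 : Complex.Gamma ((a:ℂ)+1) = ((Real.Gamma (a+1) : ℝ) : ℂ) := by
      rw [show ((a:ℂ)+1) = ((a+1 : ℝ) : ℂ) by push_cast; ring, Complex.Gamma_ofReal]
    have h2 : Complex.Gamma ((b:ℂ)+1) = ((Real.Gamma (b+1) : ℝ) : ℂ) := by
      rw [show ((b:ℂ)+1) = ((b+1 : ℝ) : ℂ) by push_cast; ring, Complex.Gamma_ofReal]
    have h3 : Complex.Gamma ((a:ℂ)+1+((b:ℂ)+1)) = ((Real.Gamma (a+1+(b+1)) : ℝ) : ℂ) := by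
      rw [show ((a:ℂ)+1+((b:ℂ)+1)) = ((a+1+(b+1) : ℝ) : ℂ) by push_cast; ring,
        Complex.Gamma_ofReal]
    rw [h1, h2, h3] at hmul
    unfold Beta
    push_cast
    rw [eq_div_iff hGne, mul_comm, ← hmul]
  have hLHS : (∫ x in (0:ℝ)..c, (x : ℂ) ^ ((a:ℂ)+1-1) * ((c : ℂ) - x) ^ ((b:ℂ)+1-1))
      = ((∫ u in (0:ℝ)..c, u ^ a * (c - u) ^ b : ℝ) : ℂ) := by
    rw [← intervalIntegral.integral_ofReal]
    apply intervalIntegral.integral_congr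
    intro x hx
    rw [Set.uIcc_of_le hc.le] at hx
    obtain ⟨hx0, hxc⟩ := hx
    rw [show ((a:ℂ)+1-1) = (a:ℂ) by ring, show ((b:ℂ)+1-1) = (b:ℂ) by ring]
    push_cast [Complex.ofReal_cpow hx0, Complex.ofReal_cpow (show (0:ℝ) ≤ c - x by linarith)]
    ring
  rw [hLHS, hBeq] at hsc
  have hRHS : ((c : ℂ)) ^ ((a:ℂ)+1+((b:ℂ)+1)-1) = ((c ^ (1+a+b) : ℝ) : ℂ) := by
    rw [Complex.ofReal_cpow hc.le]
    congr 1
    push_cast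
    ring
  rw [hRHS] at hsc
  exact_mod_cast hsc

theorem stmt_1 (a b : ℝ) (ha : -1 < a) (ha0 : a ≤ 0) (hb1 : |b| < 1) (hb2 : |b| < 1 + a) :
    ∃ C > (0:ℝ), ∀ s t : ℝ, 0 ≤ s → 0 ≤ t →
      t ^ (1 + a + b) + s ^ (1 + a + b) - 2 * R a b t s ≤ C * |t - s| ^ (1 + a + b) := by
  obtain ⟨hbl, hbu⟩ := abs_lt.mp hb1
  have hb2' := (abs_lt.mp hb2).1
  have hp : 0 < 1 + a + b := by linarith
  set B := Beta (a+1) (b+1) with hBdef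
  have hB : 0 < B := beta_pos' ha hbl
  have hBne : B ≠ 0 := hB.ne'
  refine ⟨1, one_pos, ?_⟩
  have key : ∀ s t : ℝ, 0 ≤ s → s ≤ t →
      t ^ (1 + a + b) + s ^ (1 + a + b) - 2 * R a b t s ≤ 1 * |t - s| ^ (1 + a + b) := by
    intro s t hs h
    have ht : 0 ≤ t := hs.trans h
    have I1 : IntervalIntegrable (fun u => u ^ a * (t - u) ^ b) volume 0 t := integ' ha hbl ht
    have I1s : IntervalIntegrable (fun u => u ^ a * (t - u) ^ b) volume 0 s :=
      I1.mono_set (by rw [Set.uIcc_of_le hs, Set.uIcc_of_le ht]; exact Set.Icc_subset_Icc le_rfl h)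
    have I1st : IntervalIntegrable (fun u => u ^ a * (t - u) ^ b) volume s t :=
      I1.mono_set (by rw [Set.uIcc_of_le h, Set.uIcc_of_le ht]; exact Set.Icc_subset_Icc hs le_rfl)
    have I2 : IntervalIntegrable (fun u => u ^ a * (s - u) ^ b) volume 0 s := integ' ha hbl hs
    have hIs : ∫ u in (0:ℝ)..s, u ^ a * (s - u) ^ b = s ^ (1+a+b) * B := beta_eval' ha hbl hp hs
    have hIt : ∫ u in (0:ℝ)..t, u ^ a * (t - u) ^ b = t ^ (1+a+b) * B := beta_eval' ha hbl hp ht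
    have hsplit : (∫ u in (0:ℝ)..s, u ^ a * (t - u) ^ b) + ∫ u in s..t, u ^ a * (t - u) ^ b
        = ∫ u in (0:ℝ)..t, u ^ a * (t - u) ^ b :=
      intervalIntegral.integral_add_adjacent_intervals I1s I1st
    -- compute 2 * R
    have hR : 2 * R a b t s = (1/B) * ((∫ u in (0:ℝ)..s, u ^ a * (t - u) ^ b) + s ^ (1+a+b) * B) := by
      unfold R
      rw [min_eq_right h]
      have : (∫ u in (0:ℝ)..s, u ^ a * ((t - u) ^ b + (s - u) ^ b))
          = (∫ u in (0:ℝ)..s, u ^ a * (t - u) ^ b) + ∫ u in (0:ℝ)..s, u ^ a * (s - u) ^ b := by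
        rw [← intervalIntegral.integral_add I1s I2]
        apply intervalIntegral.integral_congr
        intro u _
        ring
      rw [this, hIs, ← hBdef]
      field_simp
    -- the shifted integrand is integrable on [s, t]
    have Ish : IntervalIntegrable (fun u => (u - s) ^ a * (t - u) ^ b) volume s t := by
      have h0 := (integ' ha hbl (c := t - s) (by linarith)).comp_sub_right s
      have hfun : (fun x => (fun u => u ^ a * (t - s - u) ^ b) (x - s))
          = fun u => (u - s) ^ a * (t - u) ^ b := by
        funext x
        simp only
        rw [show t - s - (x - s) = t - x by ring]
      rw [hfun] at h0
      convert h0 using 2 <;> ring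
    have hshift : (∫ u in s..t, (u - s) ^ a * (t - u) ^ b) = (t - s) ^ (1+a+b) * B := by
      have hcomp := intervalIntegral.integral_comp_sub_right
        (a := s) (b := t) (f := fun w => w ^ a * ((t - s) - w) ^ b) s
      rw [show s - s = (0:ℝ) by ring] at hcomp
      rw [← beta_eval' ha hbl hp (by linarith : (0:ℝ) ≤ t - s), ← hcomp]
      apply intervalIntegral.integral_congr
      intro u _
      change (u - s) ^ a * (t - u) ^ b = (u - s) ^ a * (t - s - (u - s)) ^ b
      rw [show t - s - (u - s) = t - u by ring]
    -- pointwise comparison on Ioc s t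
    have hmono : (∫ u in s..t, u ^ a * (t - u) ^ b) ≤ ∫ u in s..t, (u - s) ^ a * (t - u) ^ b := by
      rw [intervalIntegral.integral_of_le h, intervalIntegral.integral_of_le h]
      apply setIntegral_mono_on
      · exact (intervalIntegrable_iff_integrableOn_Ioc_of_le h).mp I1st
      · exact (intervalIntegrable_iff_integrableOn_Ioc_of_le h).mp Ish
      · exact measurableSet_Ioc
      · intro u hu
        obtain ⟨hu1, hu2⟩ := hu
        have h1 : 0 < u - s := by linarith
        have h2 : u - s ≤ u := by linarith
        have := Real.rpow_le_rpow_of_nonpos h1 h2 ha0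
        exact mul_le_mul_of_nonneg_right this (Real.rpow_nonneg (by linarith) b)
    -- put everything together
    have habs : |t - s| = t - s := abs_of_nonneg (by linarith)
    rw [habs, one_mul]
    have hE : t ^ (1 + a + b) + s ^ (1 + a + b) - 2 * R a b t s
        = (1/B) * ∫ u in s..t, u ^ a * (t - u) ^ b := by
      have ht' : t ^ (1+a+b) = (1/B) * ((∫ u in (0:ℝ)..s, u ^ a * (t - u) ^ b)
          + ∫ u in s..t, u ^ a * (t - u) ^ b) := by
        rw [hsplit, hIt]; field_simp
      rw [hR, ht']
      field_simp
      ring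
    rw [hE]
    calc (1/B) * ∫ u in s..t, u ^ a * (t - u) ^ b
        ≤ (1/B) * ∫ u in s..t, (u - s) ^ a * (t - u) ^ b :=
          mul_le_mul_of_nonneg_left hmono (by positivity)
      _ = (t - s) ^ (1+a+b) := by rw [hshift]; field_simp
  intro s t hs ht
  rcases le_total s t with h | h
  · exact key s t hs h
  · have hsym : R a b t s = R a b s t := by
      unfold R
      rw [min_comm]
      congr 1
      apply intervalIntegral.integral_congr
      intro u _
      ring
    have := key t s ht h
    rw [abs_sub_comm] at this
    rw [hsym]
    linarith
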